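/- F_q-linear trading of subsystem dimension for co-subsystem dimension: Let q be a power of a prime p. If there exists an F_q-linear [[n,k,r,d]]_q Clifford subsystem code with k > 1 that is pure to d', then there exists an F_q-linear [[n, k−1, r+1, d_m]]_q Clifford subsystem code with d_m ≥ d that is pure to min{d, d'}. Moreover, if a pure F_q-linear [[n,1,r,d]]_q Clifford subsystem code exists, then there exists an F_q-linear [[n,0,r+1,d]]_q Clifford subsystem code. -/

import Mathlib

open Finset

/-- Symplectic weight of a vector `(a|b) ∈ F_q^n × F_q^n`. -/
noncomputable def swt {F : Type} [Field F] {n : ℕ} (v : (Fin n → F) × (Fin n → F)) : ℕ :=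
  {i : Fin n | ¬(v.1 i = 0 ∧ v.2 i = 0)}.ncard

/-- Minimum symplectic weight of a nonzero element of a set. -/
noncomputable def minSwt {F : Type} [Field F] {n : ℕ} (S : Set ((Fin n → F) × (Fin n → F))) : ℕ :=
  sInf (swt '' (S \ {0}))

/-- The trace-symplectic form on `F_q^{2n}`. -/
noncomputable def trSympForm (p : ℕ) {F : Type} [Field F] [Fintype F] [CharP F p] {n : ℕ}
    (u v : (Fin n → F) × (Fin n → F)) : ZMod p :=
  letI := ZMod.algebra F p
  Algebra.trace (ZMod p) F (∑ i, (v.1 i * u.2 i - u.1 i * v.2 i))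

/-- The trace-symplectic dual of a set of vectors in `F_q^{2n}`. -/
def sympDual (p : ℕ) {F : Type} [Field F] [Fintype F] [CharP F p] {n : ℕ}
    (C : Set ((Fin n → F) × (Fin n → F))) : Set ((Fin n → F) × (Fin n → F)) :=
  {v | ∀ w ∈ C, trSympForm p v w = 0}

/-- `C` (an additive code in `F_q^{2n}`) defines an `((n,K,R,d))_q` Clifford subsystem code. -/
def IsSubsysCode (p : ℕ) {F : Type} [Field F] [Fintype F] [CharP F p] {n : ℕ}
    (C : AddSubgroup ((Fin n → F) × (Fin n → F))) (K R d : ℕ) : Prop :=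
  let Ds : Set ((Fin n → F) × (Fin n → F)) := ↑C ∩ sympDual p ↑C
  Nat.card Ds * (K * R) = Fintype.card F ^ n ∧
  Nat.card C * K = Fintype.card F ^ n * R ∧
  (sympDual p Ds = ↑C → d = minSwt (sympDual p Ds)) ∧
  (sympDual p Ds ≠ ↑C → d = minSwt (sympDual p Ds \ ↑C))

/-- The subsystem code defined by `C` is pure to `d'`. -/
def PureTo {F : Type} [Field F] {n : ℕ}
    (C : AddSubgroup ((Fin n → F) × (Fin n → F))) (d' : ℕ) : Prop :=
  ∀ v ∈ C, v ≠ 0 → d' ≤ swt v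

/-- The subsystem code defined by `C` is `F_q`-linear. -/
def FqLinear {F : Type} [Field F] {n : ℕ}
    (C : AddSubgroup ((Fin n → F) × (Fin n → F))) : Prop :=
  ∀ (a : F), ∀ v ∈ C, a • v ∈ C

/-- Hamming weight.-/
noncomputable def hwt {F : Type} [Field F] {n : ℕ} (v : Fin n → F) : ℕ := {i | v i ≠ 0}.ncard

/-- Minimum Hamming weight of a nonzero element of a set. -/
noncomputable def minHwt {F : Type} [Field F] {n : ℕ} (S : Set (Fin n → F)) : ℕ :=
  sInf (hwt '' (S \ {0}))

/-- Euclidean dual. -/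
def euclDual {F : Type} [Field F] {n : ℕ} (C : Set (Fin n → F)) : Set (Fin n → F) :=
  {x | ∀ y ∈ C, ∑ i, x i * y i = 0}

/-- Hermitian dual (with respect to `x ↦ x^q`). -/
def hermDual (q : ℕ) {K : Type} [Field K] {n : ℕ} (C : Set (Fin n → K)) : Set (Fin n → K) :=
  {x | ∀ y ∈ C, ∑ i, x i ^ q * y i = 0}

/-- Cyclotomic coset of `a` modulo `n` (w.r.t. multiplier `q`). -/
def cycCoset (q n : ℕ) (a : ZMod n) : Set (ZMod n) := {x | ∃ i : ℕ, x = a * (q : ZMod n) ^ i}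

set_option linter.unusedSectionVars false

section Helpers
open LinearMap Module Submodule
variable {p : ℕ} [Fact p.Prime] {F : Type} [Field F] [Fintype F] [CharP F p] {n : ℕ}

noncomputable def sB (F : Type) [Field F] (n : ℕ) :
    LinearMap.BilinForm F ((Fin n → F) × (Fin n → F)) :=
  LinearMap.mk₂ F (fun u v => ∑ i, (v.1 i * u.2 i - u.1 i * v.2 i))
    (fun m m' v => by
      simp only [Prod.fst_add, Prod.snd_add, Pi.add_apply, ← Finset.sum_add_distrib]
      exact Finset.sum_congr rfl fun i _ => by ring)
    (fun c m v => by
      simp only [Prod.smul_fst, Prod.smul_snd, Pi.smul_apply, smul_eq_mul, Finset.mul_sum]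
      exact Finset.sum_congr rfl fun i _ => by ring)
    (fun m v v' => by
      simp only [Prod.fst_add, Prod.snd_add, Pi.add_apply, ← Finset.sum_add_distrib]
      exact Finset.sum_congr rfl fun i _ => by ring)
    (fun c m v => by
      simp only [Prod.smul_fst, Prod.smul_snd, Pi.smul_apply, smul_eq_mul, Finset.mul_sum]
      exact Finset.sum_congr rfl fun i _ => by ring)

lemma sB_apply (u v : (Fin n → F) × (Fin n → F)) :
    sB F n u v = ∑ i, (v.1 i * u.2 i - u.1 i * v.2 i) := rfl

lemma sB_self (u : (Fin n → F) × (Fin n → F)) : sB F n u u = 0 := by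
  rw [sB_apply]; exact Finset.sum_eq_zero fun i _ => by ring

lemma sB_skew (u v : (Fin n → F) × (Fin n → F)) : sB F n u v = - sB F n v u := by
  have h : sB F n u v + sB F n v u = 0 := by
    rw [sB_apply, sB_apply, ← Finset.sum_add_distrib]
    exact Finset.sum_eq_zero fun i _ => by ring
  linear_combination h

lemma sB_refl : (sB F n).IsRefl := fun u v h => by
  rw [sB_skew, h, neg_zero]

lemma sB_nondeg : (sB F n).Nondegenerate := by
  refine (LinearMap.IsRefl.nondegenerate_iff_separatingLeft (B := sB F n) sB_refl).mpr ?_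
  intro u h
  by_contra hu
  have h12 : u.1 ≠ 0 ∨ u.2 ≠ 0 := by
    by_contra h'
    push_neg at h'
    exact hu (Prod.ext h'.1 h'.2)
  rcases h12 with h1 | h2
  · obtain ⟨j, hj⟩ := Function.ne_iff.mp h1
    have := h (0, Pi.single j 1)
    rw [sB_apply] at this
    simp only [Pi.zero_apply, zero_mul, Pi.single_apply, mul_ite, mul_one, mul_zero, zero_sub,
      Finset.sum_neg_distrib, Finset.sum_ite_eq', Finset.mem_univ, if_true, neg_eq_zero] at this
    exact hj this
  · obtain ⟨j, hj⟩ := Function.ne_iff.mp h2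
    have := h (Pi.single j 1, 0)
    rw [sB_apply] at this
    simp only [Pi.zero_apply, mul_zero, sub_zero, Pi.single_apply, ite_mul, one_mul, zero_mul,
      Finset.sum_ite_eq', Finset.mem_univ, if_true] at this
    exact hj this

lemma trace_ndg {a : F}
    (h : ∀ γ : F, (letI := ZMod.algebra F p; Algebra.trace (ZMod p) F (a * γ)) = 0) : a = 0 := by
  have hrc : ringChar F = p := ringChar.eq F p
  subst hrc
  letI := ZMod.algebra F (ringChar F)
  by_contra ha
  obtain ⟨b, hb⟩ := FiniteField.trace_to_zmod_nondegenerate F ha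
  exact hb (h b)

lemma trSympForm_eq (u v : (Fin n → F) × (Fin n → F)) :
    trSympForm p u v =
      (letI := ZMod.algebra F p; Algebra.trace (ZMod p) F (sB F n u v)) := rfl

lemma sympDual_eq_orthogonal (W : Submodule F ((Fin n → F) × (Fin n → F))) :
    sympDual p (↑W : Set ((Fin n → F) × (Fin n → F))) = (((sB F n).orthogonal W : Submodule F _) : Set ((Fin n → F) × (Fin n → F))) := by
  letI := ZMod.algebra F p
  ext v
  constructor
  · intro hv
    refine BilinForm.mem_orthogonal_iff.mpr fun w hw => ?_
    have key : sB F n v w = 0 := by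
      apply trace_ndg (p := p)
      intro γ
      have h2 := hv (γ • w) (W.smul_mem γ hw)
      rw [trSympForm_eq, map_smul] at h2
      simpa [smul_eq_mul, mul_comm] using h2
    exact sB_refl v w key
  · intro hv w hw
    have h0 : sB F n w v = 0 := hv w hw
    rw [trSympForm_eq, sB_skew, h0, neg_zero, map_zero]


lemma card_submodule (W : Submodule F ((Fin n → F) × (Fin n → F))) :
    Nat.card W = Fintype.card F ^ (Module.finrank F W) := by
  haveI : Fintype W := Fintype.ofFinite _
  rw [Nat.card_eq_fintype_card]
  exact card_eq_pow_finrank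

lemma finrank_V (F : Type) [Field F] [Fintype F] (n : ℕ) :
    Module.finrank F ((Fin n → F) × (Fin n → F)) = 2 * n := by
  have h1 : Fintype.card ((Fin n → F) × (Fin n → F)) = Fintype.card F ^ (2 * n) := by
    rw [Fintype.card_prod, Fintype.card_fun, Fintype.card_fin, two_mul, pow_add]
  have h2 : Fintype.card ((Fin n → F) × (Fin n → F))
      = Fintype.card F ^ Module.finrank F ((Fin n → F) × (Fin n → F)) := card_eq_pow_finrank
  exact Nat.pow_right_injective Fintype.one_lt_card (h2.symm.trans h1)

lemma orth_sup {M : Type} [AddCommGroup M] [Module F M] (B : LinearMap.BilinForm F M)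
    (A A' : Submodule F M) :
    B.orthogonal (A ⊔ A') = B.orthogonal A ⊓ B.orthogonal A' := by
  ext v
  simp only [Submodule.mem_inf, BilinForm.mem_orthogonal_iff]
  constructor
  · intro h
    exact ⟨fun a ha => h a (Submodule.mem_sup_left ha),
      fun a ha => h a (Submodule.mem_sup_right ha)⟩
  · rintro ⟨hA, hA'⟩ m hm
    obtain ⟨a, ha, b, hb, rfl⟩ := Submodule.mem_sup.mp hm
    show B (a + b) v = 0
    rw [map_add, LinearMap.add_apply, hA a ha, hA' b hb, add_zero]

lemma mem_orth_span_singleton {M : Type} [AddCommGroup M] [Module F M]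
    (B : LinearMap.BilinForm F M) (x v : M) :
    v ∈ B.orthogonal (Submodule.span F {x}) ↔ B x v = 0 := by
  rw [BilinForm.mem_orthogonal_iff]
  constructor
  · intro h
    exact h x (Submodule.mem_span_singleton_self x)
  · intro h m hm
    obtain ⟨c, rfl⟩ := Submodule.mem_span_singleton.mp hm
    show B (c • x) v = 0
    rw [map_smul, LinearMap.smul_apply, h, smul_zero]

lemma inf_span_singleton_eq_bot {M : Type} [AddCommGroup M] [Module F M]
    (U : Submodule F M) (v : M) (hv : v ∉ U) :
    U ⊓ Submodule.span F {v} = ⊥ := by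
  rw [eq_bot_iff]
  rintro z ⟨hzU, hzv⟩
  obtain ⟨a, rfl⟩ := Submodule.mem_span_singleton.mp hzv
  rcases eq_or_ne a 0 with rfl | ha
  · simp
  · exact ((hv (by simpa [smul_smul, inv_mul_cancel₀ ha] using U.smul_mem a⁻¹ hzU)).elim)

def toSubmodule (C : AddSubgroup ((Fin n → F) × (Fin n → F))) (h : ∀ (a : F), ∀ v ∈ C, a • v ∈ C) :
    Submodule F ((Fin n → F) × (Fin n → F)) where
  carrier := C
  add_mem' := fun ha hb => C.add_mem ha hb
  zero_mem' := C.zero_mem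
  smul_mem' := fun a v hv => h a v hv


set_option maxHeartbeats 1000000 in
lemma trade_main (k r : ℕ) (hk : 1 ≤ k) (C : AddSubgroup ((Fin n → F) × (Fin n → F)))
    (hlin : ∀ (a : F), ∀ v ∈ C, a • v ∈ C)
    (h1 : Nat.card ↥((↑C : Set ((Fin n → F) × (Fin n → F))) ∩ sympDual p ↑C) *
        (Fintype.card F ^ k * Fintype.card F ^ r) = Fintype.card F ^ n)
    (h2 : Nat.card C * Fintype.card F ^ k = Fintype.card F ^ n * Fintype.card F ^ r) :
    ∃ C' : AddSubgroup ((Fin n → F) × (Fin n → F)),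
      (∀ (a : F), ∀ v ∈ C', a • v ∈ C') ∧
      (↑C : Set ((Fin n → F) × (Fin n → F))) ⊆ ↑C' ∧
      ((↑C' : Set ((Fin n → F) × (Fin n → F))) ∩ sympDual p ↑C'
        = (↑C : Set ((Fin n → F) × (Fin n → F))) ∩ sympDual p ↑C) ∧
      Nat.card C' = Nat.card C * Fintype.card F ^ 2 ∧
      ((↑C' : Set ((Fin n → F) × (Fin n → F)))
        ⊆ sympDual p ((↑C : Set ((Fin n → F) × (Fin n → F))) ∩ sympDual p ↑C)) ∧
      sympDual p ((↑C : Set ((Fin n → F) × (Fin n → F))) ∩ sympDual p ↑C)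
        ≠ (↑C : Set ((Fin n → F) × (Fin n → F))) ∧
      (k = 1 → sympDual p ((↑C : Set ((Fin n → F) × (Fin n → F))) ∩ sympDual p ↑C)
        = (↑C' : Set ((Fin n → F) × (Fin n → F)))) ∧
      (1 < k → sympDual p ((↑C : Set ((Fin n → F) × (Fin n → F))) ∩ sympDual p ↑C)
          ≠ (↑C' : Set ((Fin n → F) × (Fin n → F))) ∧
        ((sympDual p ((↑C : Set ((Fin n → F) × (Fin n → F))) ∩ sympDual p ↑C)
          \ (↑C' : Set ((Fin n → F) × (Fin n → F)))).Nonempty)) := by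
  classical
  have hq2 : 1 < Fintype.card F := Fintype.one_lt_card
  set q := Fintype.card F with hq
  set B := sB F n with hB
  set W : Submodule F ((Fin n → F) × (Fin n → F)) := toSubmodule C hlin with hWdef
  have hWC : (↑W : Set ((Fin n → F) × (Fin n → F))) = ↑C := rfl
  set D := W ⊓ B.orthogonal W with hDdef
  have hDs : (↑C : Set ((Fin n → F) × (Fin n → F))) ∩ sympDual p ↑C
      = (↑D : Set ((Fin n → F) × (Fin n → F))) := by
    rw [← hWC, sympDual_eq_orthogonal, hDdef, Submodule.coe_inf]
  have hcardC : Nat.card C = q ^ Module.finrank F W := by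
    rw [← card_submodule]
    exact Nat.card_congr ⟨fun x => ⟨x.1, x.2⟩, fun x => ⟨x.1, x.2⟩, fun _ => rfl, fun _ => rfl⟩
  have hcardDs : Nat.card ↥((↑C : Set ((Fin n → F) × (Fin n → F))) ∩ sympDual p ↑C)
      = q ^ Module.finrank F D := by
    rw [hDs, ← card_submodule]
    exact Nat.card_congr ⟨fun x => ⟨x.1, x.2⟩, fun x => ⟨x.1, x.2⟩, fun _ => rfl, fun _ => rfl⟩
  have hfW : Module.finrank F W + k = n + r := by
    apply Nat.pow_right_injective hq2
    show q ^ (Module.finrank F W + k) = q ^ (n + r)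
    rw [pow_add, pow_add, ← hcardC]
    exact h2
  have hfD : Module.finrank F D + (k + r) = n := by
    apply Nat.pow_right_injective hq2
    show q ^ (Module.finrank F D + (k + r)) = q ^ n
    calc q ^ (Module.finrank F D + (k + r))
        = Nat.card ↥((↑C : Set ((Fin n → F) × (Fin n → F))) ∩ sympDual p ↑C) * (q ^ k * q ^ r) := by
          rw [hcardDs, pow_add, pow_add]
      _ = q ^ n := h1
  have hfWle : Module.finrank F W ≤ 2 * n := by rw [← finrank_V F n]; exact W.finrank_le
  have hfDle : Module.finrank F D ≤ 2 * n := by rw [← finrank_V F n]; exact D.finrank_le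
  have hfOW : Module.finrank F (B.orthogonal W) = 2 * n - Module.finrank F W := by
    rw [hB, LinearMap.BilinForm.finrank_orthogonal sB_nondeg, finrank_V]
  have hfOD : Module.finrank F (B.orthogonal D) = 2 * n - Module.finrank F D := by
    rw [hB, LinearMap.BilinForm.finrank_orthogonal sB_nondeg, finrank_V]
  have hDneOW : D ≠ B.orthogonal W := by
    intro h
    have h2' := congrArg (fun (S : Submodule F ((Fin n → F) × (Fin n → F))) =>
      Module.finrank F S) h
    rw [hfOW] at h2'
    omega
  obtain ⟨x, hxO, hxD⟩ := SetLike.exists_of_lt (lt_of_le_of_ne inf_le_right hDneOW)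
  have hxW : x ∉ W := fun h => hxD (Submodule.mem_inf.mpr ⟨h, hxO⟩)
  have horth2 : B.orthogonal (B.orthogonal W) = W :=
    LinearMap.BilinForm.orthogonal_orthogonal sB_nondeg sB_refl W
  have hxno : x ∉ B.orthogonal (B.orthogonal W) := fun h => hxW (horth2 ▸ h)
  have hy : ∃ y ∈ B.orthogonal W, B y x ≠ 0 := by
    by_contra h
    push_neg at h
    exact hxno (LinearMap.BilinForm.mem_orthogonal_iff.mpr fun m hm => h m hm)
  obtain ⟨y, hyO, hyx⟩ := hy
  have hxy : B x y ≠ 0 := by rw [hB, sB_skew]; exact neg_ne_zero.mpr hyx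
  have hx0 : x ≠ 0 := by rintro rfl; exact hyx ((B y).map_zero)
  have hy0 : y ≠ 0 := by rintro rfl; exact hxy ((B x).map_zero)
  have hBxw : ∀ w ∈ W, B x w = 0 := fun w hw => sB_refl w x (hxO w hw)
  have hByw : ∀ w ∈ W, B y w = 0 := fun w hw => sB_refl w y (hyO w hw)
  set W1 := W ⊔ Submodule.span F {x} with hW1def
  have hyW1 : y ∉ W1 := by
    intro hy1
    rw [hW1def] at hy1
    obtain ⟨w, hw, z, hz, hwz⟩ := Submodule.mem_sup.mp hy1
    obtain ⟨a, rfl⟩ := Submodule.mem_span_singleton.mp hz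
    apply hxy
    rw [← hwz]
    rw [map_add, map_smul]
    simp [show sB F n x w = 0 from hBxw w hw, hB, sB_self, smul_eq_mul]
  set W' := W1 ⊔ Submodule.span F {y} with hW'def
  have e1 := Submodule.finrank_sup_add_finrank_inf_eq W (Submodule.span F {x})
  rw [inf_span_singleton_eq_bot W x hxW, finrank_bot, finrank_span_singleton hx0,
    ← hW1def] at e1
  have e2 := Submodule.finrank_sup_add_finrank_inf_eq W1 (Submodule.span F {y})
  rw [inf_span_singleton_eq_bot W1 y hyW1, finrank_bot, finrank_span_singleton hy0,
    ← hW'def] at e2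
  have hfW' : Module.finrank F W' = Module.finrank F W + 2 := by omega
  have hWleW' : W ≤ W' := by
    rw [hW'def, hW1def]
    exact le_sup_left.trans le_sup_left
  have hxW' : x ∈ W' := by
    rw [hW'def, hW1def]
    exact Submodule.mem_sup_left (Submodule.mem_sup_right (Submodule.mem_span_singleton_self x))
  have hyW' : y ∈ W' := by
    rw [hW'def]
    exact Submodule.mem_sup_right (Submodule.mem_span_singleton_self y)
  have hW'le : W' ≤ B.orthogonal D := by
    rw [hW'def, hW1def]
    refine sup_le (sup_le ?_ ?_) ?_
    · intro w hw
      exact LinearMap.BilinForm.mem_orthogonal_iff.mpr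
        fun v hv => sB_refl w v ((Submodule.mem_inf.mp hv).2 w hw)
    · rw [Submodule.span_le, Set.singleton_subset_iff]
      exact LinearMap.BilinForm.mem_orthogonal_iff.mpr
        fun v hv => hxO v (Submodule.mem_inf.mp hv).1
    · rw [Submodule.span_le, Set.singleton_subset_iff]
      exact LinearMap.BilinForm.mem_orthogonal_iff.mpr
        fun v hv => hyO v (Submodule.mem_inf.mp hv).1
  have hD' : W' ⊓ B.orthogonal W' = D := by
    apply le_antisymm
    · rintro v hv
      obtain ⟨hv1, hv2⟩ := Submodule.mem_inf.mp hv
      rw [hW'def, hW1def] at hv1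
      obtain ⟨u, hu, z, hz, huz⟩ := Submodule.mem_sup.mp hv1
      obtain ⟨w, hw, z', hz', hwz'⟩ := Submodule.mem_sup.mp hu
      obtain ⟨a, rfl⟩ := Submodule.mem_span_singleton.mp hz'
      obtain ⟨b, rfl⟩ := Submodule.mem_span_singleton.mp hz
      have hvw : v = w + a • x + b • y := by rw [← huz, ← hwz']
      have hBxv : B x v = 0 := hv2 x hxW'
      have hByv : B y v = 0 := hv2 y hyW'
      have hb : b = 0 := by
        have hc : B x v = b * B x y := by
          rw [hvw]
          simp [show sB F n x w = 0 from hBxw w hw, hB, sB_self, smul_eq_mul]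
        rw [hBxv] at hc
        exact (mul_eq_zero.mp hc.symm).resolve_right hxy
      have ha : a = 0 := by
        have hc : B y v = a * B y x := by
          rw [hvw]
          simp [show sB F n y w = 0 from hByw w hw, hB, sB_self, smul_eq_mul]
        rw [hByv] at hc
        exact (mul_eq_zero.mp hc.symm).resolve_right hyx
      rw [ha, hb] at hvw
      simp only [zero_smul, add_zero] at hvw
      refine Submodule.mem_inf.mpr ⟨hvw ▸ hw, ?_⟩
      exact LinearMap.BilinForm.mem_orthogonal_iff.mpr fun m hm => hv2 m (hWleW' hm)
    · refine le_inf (inf_le_left.trans hWleW') ?_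
      intro v hv
      exact LinearMap.BilinForm.mem_orthogonal_iff.mpr fun m hm => sB_refl v m (hW'le hm v hv)
  -- assemble
  refine ⟨W'.toAddSubgroup, fun a v hv => W'.smul_mem a hv, ?_, ?_, ?_, ?_, ?_, ?_, ?_⟩
  · rw [Submodule.coe_toAddSubgroup, ← hWC]
    exact hWleW'
  · rw [Submodule.coe_toAddSubgroup, sympDual_eq_orthogonal, ← Submodule.coe_inf, hD', hDs]
  · have : Nat.card W'.toAddSubgroup = Nat.card W' :=
      Nat.card_congr ⟨fun x => ⟨x.1, x.2⟩, fun x => ⟨x.1, x.2⟩, fun _ => rfl, fun _ => rfl⟩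
    rw [this, card_submodule, hfW', hcardC, pow_add]
  · rw [Submodule.coe_toAddSubgroup, hDs, sympDual_eq_orthogonal]
    exact hW'le
  · rw [hDs, sympDual_eq_orthogonal, ← hWC]
    intro h
    have heq : B.orthogonal D = W := SetLike.coe_injective h
    have h2' := congrArg (fun (S : Submodule F ((Fin n → F) × (Fin n → F))) =>
      Module.finrank F S) heq
    rw [hfOD] at h2'
    omega
  · intro hk1
    rw [hDs, sympDual_eq_orthogonal, Submodule.coe_toAddSubgroup]
    have heq : W' = B.orthogonal D :=
      Submodule.eq_of_le_of_finrank_le hW'le (by rw [hfOD, hfW']; omega)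
    rw [heq]
  · intro hk1
    constructor
    · rw [hDs, sympDual_eq_orthogonal, Submodule.coe_toAddSubgroup]
      intro h
      have heq : B.orthogonal D = W' := SetLike.coe_injective h
      have h2' := congrArg (fun (S : Submodule F ((Fin n → F) × (Fin n → F))) =>
        Module.finrank F S) heq
      rw [hfOD, hfW'] at h2'
      omega
    · have hlt : W' < B.orthogonal D := by
        refine lt_of_le_of_ne hW'le ?_
        intro h
        have h2' := congrArg (fun (S : Submodule F ((Fin n → F) × (Fin n → F))) =>
          Module.finrank F S) h
        rw [hfOD, hfW'] at h2'
        omega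
      obtain ⟨v, hv1, hv2⟩ := SetLike.exists_of_lt hlt
      exact ⟨v, by rw [hDs, sympDual_eq_orthogonal, Submodule.coe_toAddSubgroup]; exact ⟨hv1, hv2⟩⟩

end Helpers

section MinSwtLemmas
variable {F : Type} [Field F] {n : ℕ}

lemma minSwt_le {S : Set ((Fin n → F) × (Fin n → F))} {v : (Fin n → F) × (Fin n → F)}
    (hv : v ∈ S) (h0 : v ≠ 0) : minSwt S ≤ swt v :=
  Nat.sInf_le ⟨v, ⟨hv, by simpa using h0⟩, rfl⟩

lemma minSwt_mono {S T : Set ((Fin n → F) × (Fin n → F))} (hTS : T ⊆ S)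
    (hne : ∃ v ∈ T, v ≠ 0) : minSwt S ≤ minSwt T := by
  obtain ⟨v, hv, h0⟩ := hne
  have hmem : minSwt T ∈ swt '' (T \ {0}) :=
    Nat.sInf_mem ⟨swt v, ⟨v, ⟨hv, by simpa using h0⟩, rfl⟩⟩
  obtain ⟨w, hw, hws⟩ := hmem
  exact hws ▸ minSwt_le (hTS hw.1) (by simpa using hw.2)

end MinSwtLemmas

/-- `F_q`-linear trading of subsystem dimension for co-subsystem
dimension.  If there exists an `F_q`-linear `[[n,k,r,d]]_q` Clifford subsystem
code with `k > 1` that is pure to `d'`, then there exists an `F_q`-linear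
`[[n, k−1, r+1, d_m]]_q` Clifford subsystem code with `d_m ≥ d` that is pure to
`min{d, d'}`.  Moreover, if a pure `F_q`-linear `[[n,1,r,d]]_q` Clifford
subsystem code exists, then there exists an `F_q`-linear `[[n,0,r+1,d]]_q`
Clifford subsystem code. -/
theorem trade_subsystem_for_cosubsystem_linear
    (p : ℕ) (hp : p.Prime) (F : Type) [Field F] [Fintype F] [CharP F p]
    (n k r d d' : ℕ) :
    ((1 < k ∧ ∃ C : AddSubgroup ((Fin n → F) × (Fin n → F)),
        IsSubsysCode p C (Fintype.card F ^ k) (Fintype.card F ^ r) d ∧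
        FqLinear C ∧ PureTo C d') →
      ∃ dm : ℕ, d ≤ dm ∧
        ∃ C : AddSubgroup ((Fin n → F) × (Fin n → F)),
          IsSubsysCode p C (Fintype.card F ^ (k - 1)) (Fintype.card F ^ (r + 1)) dm ∧
          FqLinear C ∧ PureTo C (min d d')) ∧
    ((∃ C : AddSubgroup ((Fin n → F) × (Fin n → F)),
        IsSubsysCode p C (Fintype.card F ^ 1) (Fintype.card F ^ r) d ∧
        FqLinear C ∧ PureTo C d) →
      ∃ C : AddSubgroup ((Fin n → F) × (Fin n → F)),
        IsSubsysCode p C (Fintype.card F ^ 0) (Fintype.card F ^ (r + 1)) d ∧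
        FqLinear C) := by
  haveI := Fact.mk hp
  constructor
  · rintro ⟨hk, C, hC, hlin, hpure⟩
    obtain ⟨h1, h2, h3, h4⟩ := hC
    obtain ⟨C', hlin', hsub, hDs', hcard', hsubDual, hneC, _, hgt⟩ :=
      trade_main k r hk.le C hlin h1 h2
    obtain ⟨hneC', hnonempty⟩ := hgt hk
    have hd : d = minSwt (sympDual p ((↑C : Set ((Fin n → F) × (Fin n → F)))
        ∩ sympDual p ↑C) \ ↑C) := h4 hneC
    refine ⟨minSwt (sympDual p ((↑C : Set ((Fin n → F) × (Fin n → F)))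
        ∩ sympDual p ↑C) \ ↑C'), ?_, C', ?_, hlin', ?_⟩
    · rw [hd]
      apply minSwt_mono (Set.diff_subset_diff_right hsub)
      obtain ⟨v, hv⟩ := hnonempty
      exact ⟨v, hv, fun h0 => hv.2 (h0 ▸ C'.zero_mem)⟩
    · refine ⟨?_, ?_, ?_, ?_⟩
      · rw [hDs']
        rw [show Fintype.card F ^ (k - 1) * Fintype.card F ^ (r + 1)
            = Fintype.card F ^ k * Fintype.card F ^ r by
          rw [← pow_add, ← pow_add]; congr 1; omega]
        exact h1
      · rw [hcard']
        calc Nat.card C * Fintype.card F ^ 2 * Fintype.card F ^ (k - 1)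
            = Nat.card C * Fintype.card F ^ k * Fintype.card F := by
              rw [mul_assoc, ← pow_add, mul_assoc, ← pow_succ]
              congr 2
              omega
          _ = Fintype.card F ^ n * Fintype.card F ^ (r + 1) := by
              rw [h2, mul_assoc, ← pow_succ]
      · intro h
        rw [hDs'] at h
        exact absurd h hneC'
      · intro _
        rw [hDs']
    · intro v hv h0
      by_cases hvC : v ∈ C
      · exact le_trans (min_le_right d d') (hpure v hvC h0)
      · refine le_trans (min_le_left d d') ?_
        rw [hd]
        exact minSwt_le ⟨hsubDual hv, hvC⟩ h0
  · rintro ⟨C, hC, hlin, hpure⟩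
    obtain ⟨h1, h2, h3, h4⟩ := hC
    obtain ⟨C', hlin', hsub, hDs', hcard', hsubDual, hneC, heq1, _⟩ :=
      trade_main 1 r le_rfl C hlin h1 h2
    have heq := heq1 rfl
    have hd : d = minSwt (sympDual p ((↑C : Set ((Fin n → F) × (Fin n → F)))
        ∩ sympDual p ↑C) \ ↑C) := h4 hneC
    have hCsubDual : (↑C : Set ((Fin n → F) × (Fin n → F)))
        ⊆ sympDual p ((↑C : Set ((Fin n → F) × (Fin n → F))) ∩ sympDual p ↑C) :=
      hsub.trans hsubDual
    obtain ⟨v0, hv0D, hv0C⟩ := Set.exists_of_ssubset (hCsubDual.ssubset_of_ne (Ne.symm hneC))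
    have hv00 : v0 ≠ 0 := fun h => hv0C (h ▸ C.zero_mem)
    have hmin : minSwt (sympDual p ((↑C : Set ((Fin n → F) × (Fin n → F)))
        ∩ sympDual p ↑C)) = d := by
      apply le_antisymm
      · rw [hd]
        exact minSwt_mono Set.diff_subset ⟨v0, ⟨hv0D, hv0C⟩, hv00⟩
      · refine le_csInf ⟨swt v0, ⟨v0, ⟨hv0D, by simpa using hv00⟩, rfl⟩⟩ ?_
        rintro b ⟨w, ⟨hwD, hw0⟩, rfl⟩
        by_cases hwC : w ∈ C
        · exact hpure w hwC (by simpa using hw0)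
        · rw [hd]
          exact minSwt_le ⟨hwD, hwC⟩ (by simpa using hw0)
    refine ⟨C', ⟨?_, ?_, ?_, ?_⟩, hlin'⟩
    · rw [hDs']
      rw [show Fintype.card F ^ 0 * Fintype.card F ^ (r + 1)
          = Fintype.card F ^ 1 * Fintype.card F ^ r by
        rw [← pow_add, ← pow_add]; congr 1; omega]
      exact h1
    · rw [hcard', pow_zero, mul_one]
      calc Nat.card C * Fintype.card F ^ 2
          = Nat.card C * Fintype.card F ^ 1 * Fintype.card F := by
            ring
        _ = Fintype.card F ^ n * Fintype.card F ^ (r + 1) := by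
            rw [h2, mul_assoc, ← pow_succ]
    · intro _
      rw [hDs']
      exact hmin.symm
    · intro hne
      rw [hDs'] at hne
      exact absurd heq hne
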